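/- arXiv:1309.1754 — 3 statements merged into one kernel-verified Lean document; each statement's English description precedes it below -/
import Mathlib

section
/- Let Γ and Γ' be two graph indicators with Γ' ≤ Γ entrywise (Γ' a submodel of Γ). Suppose Ω*_Γ is a graphical lasso solution for Γ, i.e., a minimizer of h_Γ(Ω) = −log det(Ω) + tr(Σ̂Ω) + (2λ/n)Σ_{γ_ij=1}|ω_ij| + (λ/n)Σ_i ω_ii over P_Γ ∩ M⁺, and suppose (Ω*_Γ)_ij = 0 for every (i,j) with γ_ij = 1 and γ'_ij = 0. Then Ω*_Γ is also a graphical lasso solution for Γ', i.e., it minimizes h_{Γ'}(Ω) = −log det(Ω) + tr(Σ̂Ω) + (2λ/n)Σ_{γ'_ij=1}|ω_ij| + (λ/n)Σ_i ω_ii over P_{Γ'} ∩ M⁺; in particular the graphical lasso solutions for the two models are identical. -/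
open Matrix Finset

noncomputable section

/-- `P_Γ`: symmetric matrices whose `(i,j)` entry vanishes for `i < j` with `(i,j)` not an
edge of the graph `Γ`. -/
def inModel {p : ℕ} (Γ : Finset (Fin p × Fin p)) (Ω : Matrix (Fin p) (Fin p) ℝ) : Prop :=
  Ω.IsSymm ∧ ∀ i j : Fin p, i < j → (i, j) ∉ Γ → Ω i j = 0

/-- The graphical lasso objective
`h_Γ(Ω) = −log det Ω + tr(Σ̂Ω) + (2λ/n)∑_{(i,j)∈Γ}|ω_ij| + (λ/n)∑_i ω_ii`. -/
def glassoObj {p : ℕ} (Shat : Matrix (Fin p) (Fin p) ℝ) (lam : ℝ) (n : ℕ)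
    (Γ : Finset (Fin p × Fin p)) (Ω : Matrix (Fin p) (Fin p) ℝ) : ℝ :=
  -Real.log Ω.det + (Shat * Ω).trace +
    (2 * lam / n) * ∑ ij ∈ Γ, |Ω ij.1 ij.2| + (lam / n) * ∑ i, Ω i i

/-- Let `Γ' ≤ Γ` be graph indicators, and let `Ω*` minimize the graphical
lasso objective `h_Γ` over `P_Γ ∩ M⁺` with `(Ω*)_ij = 0` for every edge of `Γ` not in `Γ'`.
Then `Ω*` also minimizes `h_{Γ'}` over `P_{Γ'} ∩ M⁺`; in particular the graphical lasso
solutions for the two models are identical. -/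
theorem stmt1 (p n : ℕ) (hn : 0 < n) (Shat : Matrix (Fin p) (Fin p) ℝ)
    (hShat : Shat.IsSymm) (lam : ℝ) (hlam : 0 < lam)
    (Γ Γ' : Finset (Fin p × Fin p))
    (hΓ : ∀ ij ∈ Γ, (ij : Fin p × Fin p).1 < ij.2) (hsub : Γ' ⊆ Γ)
    (Ωs : Matrix (Fin p) (Fin p) ℝ)
    (hΩs : inModel Γ Ωs) (hΩspd : Ωs.PosDef)
    (hmin : ∀ Ω : Matrix (Fin p) (Fin p) ℝ, inModel Γ Ω → Ω.PosDef →
      glassoObj Shat lam n Γ Ωs ≤ glassoObj Shat lam n Γ Ω)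
    (hzero : ∀ ij ∈ Γ, ij ∉ Γ' → Ωs (ij : Fin p × Fin p).1 ij.2 = 0) :
    inModel Γ' Ωs ∧
    ∀ Ω : Matrix (Fin p) (Fin p) ℝ, inModel Γ' Ω → Ω.PosDef →
      glassoObj Shat lam n Γ' Ωs ≤ glassoObj Shat lam n Γ' Ω := by
  -- objectives agree for matrices vanishing on Γ \ Γ'
  have hobj : ∀ Ω : Matrix (Fin p) (Fin p) ℝ,
      (∀ ij ∈ Γ, ij ∉ Γ' → Ω ij.1 ij.2 = 0) →
      glassoObj Shat lam n Γ' Ω = glassoObj Shat lam n Γ Ω := by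
    intro Ω hz
    unfold glassoObj
    have : ∑ ij ∈ Γ', |Ω ij.1 ij.2| = ∑ ij ∈ Γ, |Ω ij.1 ij.2| := by
      refine Finset.sum_subset hsub ?_
      intro ij h1 h2
      rw [hz ij h1 h2, abs_zero]
    rw [this]
  have hΩsz : ∀ ij ∈ Γ, ij ∉ Γ' → Ωs ij.1 ij.2 = 0 := hzero
  have hmem' : inModel Γ' Ωs := by
    refine ⟨hΩs.1, fun i j hij hnot => ?_⟩
    by_cases hmem : (i, j) ∈ Γ
    · exact hzero (i, j) hmem hnot
    · exact hΩs.2 i j hij hmem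
  refine ⟨hmem', fun Ω hΩ hpd => ?_⟩
  have hΩz : ∀ ij ∈ Γ, ij ∉ Γ' → Ω ij.1 ij.2 = 0 := by
    intro ij h1 h2
    exact hΩ.2 ij.1 ij.2 (hΓ ij h1) (by simpa using h2)
  have hΩΓ : inModel Γ Ω := by
    refine ⟨hΩ.1, fun i j hij hmem => ?_⟩
    exact hΩ.2 i j hij (fun h => hmem (hsub h))
  rw [hobj Ωs hΩsz, hobj Ω hΩz]
  exact hmin Ω hΩΓ hpd

end
end

section
/- Let A and B be p×p symmetric positive definite matrices with ‖A^{-1} − B^{-1}‖_∞ ≤ δ, and let V be any set of index pairs. Then the Hessian matrices satisfy ‖H_A − H_B‖_∞ ≤ 8δ‖B^{-1}‖_∞ + 4δ²; that is, for all (i,j), (l,m) ∈ V, |tr(A^{-1}E_(i,j)A^{-1}E_(l,m)) − tr(B^{-1}E_(i,j)B^{-1}E_(l,m))| ≤ 8δ‖B^{-1}‖_∞ + 4δ². -/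
open Matrix Finset

noncomputable section

/-- Entrywise maximum norm of a matrix. -/
def maxNorm {p : ℕ} (A : Matrix (Fin p) (Fin p) ℝ) : ℝ :=
  ⨆ i, ⨆ j, |A i j|

/-- The symmetric matrix `E_(i,j)` with `1` in entries `(i,j)` and `(j,i)` and `0` elsewhere. -/
def Estd {p : ℕ} (i j : Fin p) : Matrix (Fin p) (Fin p) ℝ :=
  fun k l => if (k = i ∧ l = j) ∨ (k = j ∧ l = i) then 1 else 0

lemma abs_entry_le_maxNorm {p : ℕ} (A : Matrix (Fin p) (Fin p) ℝ) (i j : Fin p) :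
    |A i j| ≤ maxNorm A := by
  have h1 : |A i j| ≤ ⨆ j, |A i j| :=
    le_ciSup (f := fun j => |A i j|) (Set.Finite.bddAbove (Set.finite_range _)) j
  exact h1.trans (le_ciSup (f := fun i => ⨆ j, |A i j|)
    (Set.Finite.bddAbove (Set.finite_range _)) i)

lemma trace_Estd_mul {p : ℕ} (i j : Fin p) (W : Matrix (Fin p) (Fin p) ℝ) :
    (Estd i j * W).trace = if i = j then W i i else W j i + W i j := by
  by_cases hij : i = j
  · subst hij
    simp [trace, Matrix.diag, mul_apply, Estd, ite_and, Finset.sum_ite_eq, Finset.sum_ite_eq']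
  · have h : ∀ k, ∑ c, (Estd i j) k c * W c k
        = (if k = i then W j i else 0) + (if k = j then W i j else 0) := by
      intro k
      by_cases hki : k = i <;> by_cases hkj : k = j <;>
        simp_all [Estd, Finset.sum_ite_eq', ite_and]
    simp only [trace, Matrix.diag, mul_apply, h, if_neg hij]
    rw [Finset.sum_add_distrib]
    simp [Finset.sum_ite_eq']

lemma mul_Estd_apply {p : ℕ} (l m : Fin p) (Y : Matrix (Fin p) (Fin p) ℝ) (c a : Fin p) :
    (Y * Estd l m) c a = if l = m then (if a = l then Y c l else 0)
      else (if a = m then Y c l else 0) + (if a = l then Y c m else 0) := by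
  by_cases hlm : l = m
  · subst hlm
    simp only [mul_apply, Estd, if_pos rfl]
    by_cases h : a = l <;> simp_all [ite_and, Finset.sum_ite_eq']
  · simp only [mul_apply, Estd, if_neg hlm]
    by_cases ham : a = m <;> by_cases hal : a = l <;>
      simp_all [ite_and, Finset.sum_ite_eq']

lemma mul_Estd_mul_apply {p : ℕ} (l m : Fin p) (Y X : Matrix (Fin p) (Fin p) ℝ) (c b : Fin p) :
    (Y * Estd l m * X) c b =
      if l = m then Y c l * X l b else Y c l * X m b + Y c m * X l b := by
  have h : (Y * Estd l m * X) c b = ∑ a, (Y * Estd l m) c a * X a b := mul_apply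
  rw [h]
  simp only [mul_Estd_apply]
  by_cases hlm : l = m <;>
    simp [hlm, add_mul, ite_mul, Finset.sum_add_distrib, Finset.sum_ite_eq']

lemma trace_XEYE {p : ℕ} (i j l m : Fin p) (X Y : Matrix (Fin p) (Fin p) ℝ) :
    (X * Estd i j * Y * Estd l m).trace =
      (Estd i j * (Y * Estd l m * X)).trace := by
  rw [mul_assoc, mul_assoc, trace_mul_comm, mul_assoc]

lemma trace_bound {p : ℕ} (i j l m : Fin p) (X Y : Matrix (Fin p) (Fin p) ℝ)
    (x y : ℝ) (hx0 : 0 ≤ x) (hy0 : 0 ≤ y)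
    (hx : ∀ a b, |X a b| ≤ x) (hy : ∀ a b, |Y a b| ≤ y) :
    |(X * Estd i j * Y * Estd l m).trace| ≤ 4 * (x * y) := by
  have key : ∀ a b c d : Fin p, |Y a b * X c d| ≤ x * y := by
    intro a b c d
    rw [abs_mul, mul_comm x y]
    exact mul_le_mul (hy a b) (hx c d) (abs_nonneg _) hy0
  have hxy : 0 ≤ x * y := mul_nonneg hx0 hy0
  rw [trace_XEYE, trace_Estd_mul]
  simp only [mul_Estd_mul_apply]
  by_cases hij : i = j <;> by_cases hlm : l = m <;> simp only [hij, hlm, if_true, if_false,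
    eq_self_iff_true, if_neg, ite_true, ite_false]
  · have := key j m m j
    linarith
  · have h1 := key j l m j
    have h2 := key j m l j
    have := abs_add_le (Y j l * X m j) (Y j m * X l j)
    linarith
  · have h1 := key j m m i
    have h2 := key i m m j
    have := abs_add_le (Y j m * X m i) (Y i m * X m j)
    linarith
  · have h1 := key j l m i
    have h2 := key j m l i
    have h3 := key i l m j
    have h4 := key i m l j
    have ha := abs_add_le (Y j l * X m i + Y j m * X l i) (Y i l * X m j + Y i m * X l j)
    have hb := abs_add_le (Y j l * X m i) (Y j m * X l i)
    have hc := abs_add_le (Y i l * X m j) (Y i m * X l j)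
    linarith

/-- Let `A` and `B` be symmetric positive definite matrices with
`‖A⁻¹ − B⁻¹‖_∞ ≤ δ`.  Then for all index pairs `(i,j)` and `(l,m)`,
`|tr(A⁻¹E_(i,j)A⁻¹E_(l,m)) − tr(B⁻¹E_(i,j)B⁻¹E_(l,m))| ≤ 8δ‖B⁻¹‖_∞ + 4δ²`;
i.e. `‖H_A − H_B‖_∞ ≤ 8δ‖B⁻¹‖_∞ + 4δ²` for the Hessian matrices indexed by any set `V`
of index pairs. -/
theorem stmt4 (p : ℕ) (A B : Matrix (Fin p) (Fin p) ℝ)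
    (hA : A.PosDef) (hB : B.PosDef) (δ : ℝ)
    (hδ : maxNorm (A⁻¹ - B⁻¹) ≤ δ) :
    ∀ i j l m : Fin p,
      |(A⁻¹ * Estd i j * A⁻¹ * Estd l m).trace -
          (B⁻¹ * Estd i j * B⁻¹ * Estd l m).trace| ≤
        8 * δ * maxNorm B⁻¹ + 4 * δ ^ 2 := by
  intro i j l m
  set D : Matrix (Fin p) (Fin p) ℝ := A⁻¹ - B⁻¹ with hDdef
  have hδ0 : 0 ≤ δ := le_trans (abs_nonneg (D i i)) ((abs_entry_le_maxNorm D i i).trans hδ)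
  have hN0 : 0 ≤ maxNorm B⁻¹ := le_trans (abs_nonneg _) (abs_entry_le_maxNorm B⁻¹ i i)
  have hD : ∀ a b, |D a b| ≤ δ := fun a b => (abs_entry_le_maxNorm _ a b).trans hδ
  have hN : ∀ a b, |B⁻¹ a b| ≤ maxNorm B⁻¹ := abs_entry_le_maxNorm _
  have hsplit : (A⁻¹ * Estd i j * A⁻¹ * Estd l m).trace -
      (B⁻¹ * Estd i j * B⁻¹ * Estd l m).trace =
      (D * Estd i j * B⁻¹ * Estd l m).trace + (B⁻¹ * Estd i j * D * Estd l m).trace +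
        (D * Estd i j * D * Estd l m).trace := by
    have hAinv : A⁻¹ = B⁻¹ + D := by rw [hDdef]; abel
    rw [hAinv]
    simp only [add_mul, mul_add, trace_add]
    ring
  rw [hsplit]
  have b1 := trace_bound i j l m D B⁻¹ δ (maxNorm B⁻¹) hδ0 hN0 hD hN
  have b2 := trace_bound i j l m B⁻¹ D (maxNorm B⁻¹) δ hN0 hδ0 hN hD
  have b3 := trace_bound i j l m D D δ δ hδ0 hδ0 hD hD
  have ha := abs_add_le ((D * Estd i j * B⁻¹ * Estd l m).trace +
    (B⁻¹ * Estd i j * D * Estd l m).trace) ((D * Estd i j * D * Estd l m).trace)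
  have hb := abs_add_le ((D * Estd i j * B⁻¹ * Estd l m).trace)
    ((B⁻¹ * Estd i j * D * Estd l m).trace)
  nlinarith [sq_nonneg δ]

end
end

section
/- Let Ω be a p×p symmetric positive definite matrix and V any nonempty set of index pairs (i,j) with i ≤ j, each unordered pair appearing at most once. Then the matrix H_Ω, with rows and columns indexed by V and entries H_Ω{(i,j),(l,m)} = tr(Ω^{-1}E_(i,j)Ω^{-1}E_(l,m)), is symmetric positive definite and its smallest eigenvalue satisfies eig_1(H_Ω) ≥ (eig_1(Ω^{-1}))² = 1/‖Ω‖_{(2,2)}² > 0. -/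
open Matrix Finset

noncomputable section

/-- `L₂`-operator norm of a matrix. -/
def opNorm {p : ℕ} (A : Matrix (Fin p) (Fin p) ℝ) : ℝ :=
  ‖Matrix.toEuclideanCLM (𝕜 := ℝ) A‖

/-- The Hessian matrix `H_B` indexed by a set `V` of index pairs, with entries
`tr(B⁻¹ E_(i,j) B⁻¹ E_(l,m))`. -/
def hessMat {p : ℕ} (B : Matrix (Fin p) (Fin p) ℝ) (V : Finset (Fin p × Fin p)) :
    Matrix {ij // ij ∈ V} {ij // ij ∈ V} ℝ :=
  fun a b => (B⁻¹ * Estd a.1.1 a.1.2 * B⁻¹ * Estd b.1.1 b.1.2).trace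

lemma step1 {p : ℕ} (Ω : Matrix (Fin p) (Fin p) ℝ) (V : Finset (Fin p × Fin p))
    (x : {ij // ij ∈ V} → ℝ) :
    x ⬝ᵥ (hessMat Ω V *ᵥ x) =
      (Ω⁻¹ * (∑ a : {ij // ij ∈ V}, x a • Estd a.1.1 a.1.2) * Ω⁻¹ *
        (∑ a : {ij // ij ∈ V}, x a • Estd a.1.1 a.1.2)).trace := by
  simp only [Finset.mul_sum, Finset.sum_mul, Matrix.mul_smul, Matrix.smul_mul,
    Matrix.trace_sum, Matrix.trace_smul, smul_eq_mul, dotProduct, mulVec, hessMat]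
  rw [Finset.sum_comm]
  refine Finset.sum_congr rfl fun a _ => ?_
  refine Finset.sum_congr rfl fun b _ => ?_
  ring

lemma conj_trace {p : ℕ} (U D A : Matrix (Fin p) (Fin p) ℝ)
    (hU : U * star U = 1) (hU' : star U * U = 1) :
    ((U * D * star U) * A * (U * D * star U) * A).trace
      = (D * (star U * A * U) * D * (star U * A * U)).trace := by
  have key : (U * D * star U) * A * (U * D * star U) * A
      = U * (D * (star U * A * U) * D * (star U * A * U)) * star U := by
    simp only [Matrix.mul_assoc]
    rw [hU, Matrix.mul_one]
  rw [key, Matrix.trace_mul_comm, ← Matrix.mul_assoc, ← Matrix.mul_assoc, hU', Matrix.one_mul]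

lemma trace_DCDC {p : ℕ} (μ : Fin p → ℝ) (C : Matrix (Fin p) (Fin p) ℝ) :
    (diagonal μ * C * diagonal μ * C).trace = ∑ i, ∑ j, μ i * μ j * (C i j * C j i) := by
  rw [Matrix.mul_assoc (diagonal μ * C)]
  simp only [Matrix.trace, Matrix.diag, Matrix.mul_apply, Matrix.diagonal_apply, ite_mul,
    zero_mul, Finset.sum_ite_eq, Finset.mem_univ, if_true]
  refine Finset.sum_congr rfl fun i _ => Finset.sum_congr rfl fun j _ => ?_
  ring

lemma frob_eq {p : ℕ} (M : Matrix (Fin p) (Fin p) ℝ) :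
    (Mᵀ * M).trace = ∑ i, ∑ j, M i j ^ 2 := by
  simp only [Matrix.trace, Matrix.diag, Matrix.mul_apply, Matrix.transpose_apply, sq]
  exact Finset.sum_comm

lemma frob_conj {p : ℕ} (U A : Matrix (Fin p) (Fin p) ℝ) (hU : U * Uᵀ = 1) :
    ∑ i, ∑ j, (Uᵀ * A * U) i j ^ 2 = ∑ i, ∑ j, A i j ^ 2 := by
  rw [← frob_eq, ← frob_eq]
  have h : (Uᵀ * A * U)ᵀ * (Uᵀ * A * U) = Uᵀ * ((Aᵀ * A) * U) := by
    simp only [Matrix.transpose_mul, Matrix.transpose_transpose, Matrix.mul_assoc]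
    rw [← Matrix.mul_assoc U Uᵀ, hU, Matrix.one_mul]
  rw [h, Matrix.trace_mul_comm, Matrix.mul_assoc, hU, Matrix.mul_one]

lemma A_entry {p : ℕ} {V : Finset (Fin p × Fin p)} (hV : ∀ ij ∈ V, ij.1 ≤ ij.2)
    (x : {ij // ij ∈ V} → ℝ) (a : {ij // ij ∈ V}) :
    (∑ b : {ij // ij ∈ V}, x b • Estd b.1.1 b.1.2) (a : Fin p × Fin p).1
      (a : Fin p × Fin p).2 = x a := by
  simp only [Matrix.sum_apply, Matrix.smul_apply, Estd, smul_eq_mul]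
  rw [Finset.sum_eq_single a]
  · simp
  · intro b _ hb
    rw [if_neg, mul_zero]
    rintro (⟨h1, h2⟩ | ⟨h1, h2⟩)
    · exact hb (Subtype.ext (Prod.ext h1 h2)).symm
    · have ha := hV a.1 a.2
      have hbv := hV b.1 b.2
      have e1 : (a : Fin p × Fin p).1 = (b : Fin p × Fin p).1 :=
        le_antisymm (ha.trans h2.le) (hbv.trans h1.symm.le)
      have e2 : (a : Fin p × Fin p).2 = (b : Fin p × Fin p).2 :=
        le_antisymm (h2.le.trans hbv) (h1.symm.le.trans ha)
      exact hb (Subtype.ext (Prod.ext e1 e2)).symm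
  · intro h; exact absurd (Finset.mem_univ a) h

lemma sum_sq_le {p : ℕ} {V : Finset (Fin p × Fin p)} (hV : ∀ ij ∈ V, ij.1 ≤ ij.2)
    (x : {ij // ij ∈ V} → ℝ) :
    ∑ a : {ij // ij ∈ V}, x a ^ 2
      ≤ ∑ i, ∑ j, (∑ b : {ij // ij ∈ V}, x b • Estd b.1.1 b.1.2) i j ^ 2 := by
  calc ∑ a : {ij // ij ∈ V}, x a ^ 2
      = ∑ q ∈ V, (∑ b : {ij // ij ∈ V}, x b • Estd b.1.1 b.1.2) q.1 q.2 ^ 2 := by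
        rw [← Finset.sum_coe_sort V
          (fun q => (∑ b : {ij // ij ∈ V}, x b • Estd b.1.1 b.1.2) q.1 q.2 ^ 2)]
        exact Finset.sum_congr rfl fun a _ => by rw [A_entry hV x a]
    _ ≤ ∑ q : Fin p × Fin p, (∑ b : {ij // ij ∈ V}, x b • Estd b.1.1 b.1.2) q.1 q.2 ^ 2 :=
        Finset.sum_le_sum_of_subset_of_nonneg (Finset.subset_univ V)
          (fun q _ _ => sq_nonneg _)
    _ = ∑ i, ∑ j, (∑ b : {ij // ij ∈ V}, x b • Estd b.1.1 b.1.2) i j ^ 2 :=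
        Fintype.sum_prod_type _

lemma Estd_trans {p : ℕ} (i j : Fin p) : (Estd i j)ᵀ = Estd i j := by
  ext k l
  simp only [Matrix.transpose_apply, Estd]
  exact if_congr (by tauto) rfl rfl

lemma quad_key {p : ℕ} [Nonempty (Fin p)] (Ω : Matrix (Fin p) (Fin p) ℝ) (hΩ : Ω.PosDef)
    (V : Finset (Fin p × Fin p)) (hV : ∀ ij ∈ V, ij.1 ≤ ij.2)
    (hinv : (Ω⁻¹).IsHermitian) (x : {ij // ij ∈ V} → ℝ) :
    (⨅ i, hinv.eigenvalues i) ^ 2 * ∑ a, x a ^ 2 ≤ x ⬝ᵥ (hessMat Ω V *ᵥ x) := by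
  have hBpd : (Ω⁻¹).PosDef := hΩ.inv
  set μ : Fin p → ℝ := hinv.eigenvalues with hμ
  set lam : ℝ := ⨅ i, μ i with hlam
  have hμpos : ∀ i, 0 < μ i := fun i => hBpd.eigenvalues_pos i
  have hlam_le : ∀ i, lam ≤ μ i := fun i => ciInf_le (Finite.bddBelow_range μ) i
  obtain ⟨i0, hi0⟩ := exists_eq_ciInf_of_finite (f := μ)
  have hlampos : 0 < lam := hlam ▸ hi0 ▸ hμpos i0
  set U : Matrix (Fin p) (Fin p) ℝ := (hinv.eigenvectorUnitary : Matrix (Fin p) (Fin p) ℝ) with hUdef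
  have hUmem : U ∈ Matrix.unitaryGroup (Fin p) ℝ := hinv.eigenvectorUnitary.2
  have hU1 : U * star U = 1 := (Matrix.mem_unitaryGroup_iff).mp hUmem
  have hU1' : star U * U = 1 := (Matrix.mem_unitaryGroup_iff').mp hUmem
  have hstar : star U = Uᵀ := by
    rw [Matrix.star_eq_conjTranspose, Matrix.conjTranspose_eq_transpose_of_trivial]
  have hspec : Ω⁻¹ = U * diagonal μ * star U := by
    have h := hinv.spectral_theorem
    rwa [show (RCLike.ofReal ∘ μ : Fin p → ℝ) = μ from funext fun i => rfl] at h
  set A := ∑ b : {ij // ij ∈ V}, x b • Estd b.1.1 b.1.2 with hAdef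
  have hAsymm : Aᵀ = A := by
    rw [hAdef, Matrix.transpose_sum]
    exact Finset.sum_congr rfl fun b _ => by rw [Matrix.transpose_smul, Estd_trans]
  set C := star U * A * U with hCdef
  have hCt : Cᵀ = C := by
    rw [hCdef, hstar]
    simp only [Matrix.transpose_mul, Matrix.transpose_transpose, hAsymm, Matrix.mul_assoc]
  have hCsymm : ∀ i j, C j i = C i j := fun i j => congrFun (congrFun hCt i) j
  rw [step1, hspec, conj_trace _ _ _ hU1 hU1', ← hCdef, trace_DCDC]
  have hfrob : ∑ i, ∑ j, C i j ^ 2 = ∑ i, ∑ j, A i j ^ 2 := by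
    rw [hCdef, hstar]
    exact frob_conj U A (hstar ▸ hU1)
  calc lam ^ 2 * ∑ a, x a ^ 2
      ≤ lam ^ 2 * ∑ i, ∑ j, A i j ^ 2 :=
        mul_le_mul_of_nonneg_left (sum_sq_le hV x) (sq_nonneg lam)
    _ = ∑ i, ∑ j, lam ^ 2 * C i j ^ 2 := by
        rw [← hfrob, Finset.mul_sum]
        exact Finset.sum_congr rfl fun i _ => Finset.mul_sum _ _ _
    _ ≤ ∑ i, ∑ j, μ i * μ j * (C i j * C j i) := by
        refine Finset.sum_le_sum fun i _ => Finset.sum_le_sum fun j _ => ?_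
        rw [hCsymm i j, ← sq, sq lam]
        exact mul_le_mul_of_nonneg_right
          (mul_le_mul (hlam_le i) (hlam_le j) hlampos.le (hμpos i).le) (sq_nonneg _)

lemma opNorm_eq_iSup {p : ℕ} [Nonempty (Fin p)] (Ω : Matrix (Fin p) (Fin p) ℝ)
    (hΩ : Ω.PosDef) :
    ‖Matrix.toEuclideanCLM (𝕜 := ℝ) Ω‖ = ⨆ i, hΩ.1.eigenvalues i := by
  set μ : Fin p → ℝ := hΩ.1.eigenvalues with hμdef
  set b := hΩ.1.eigenvectorBasis with hbdef
  set T := Matrix.toEuclideanCLM (𝕜 := ℝ) Ω with hTdef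
  set M : ℝ := ⨆ i, μ i with hMdef
  have hμpos : ∀ i, 0 < μ i := fun i => hΩ.eigenvalues_pos i
  have hle : ∀ i, μ i ≤ M := fun i => le_ciSup (Finite.bddAbove_range μ) i
  obtain ⟨i1, hi1⟩ := exists_eq_ciSup_of_finite (f := μ)
  have hMpos : 0 < M := hMdef ▸ hi1 ▸ hμpos i1
  have hTb : ∀ i, T (b i) = μ i • b i := by
    intro i
    have h0 : T (b i) =
        (WithLp.equiv 2 (Fin p → ℝ)).symm (Ω *ᵥ (WithLp.equiv 2 (Fin p → ℝ) (b i))) := rfl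
    rw [h0]
    have h1 : (WithLp.equiv 2 (Fin p → ℝ)) (b i) = ⇑(b i) := rfl
    rw [h1, hΩ.1.mulVec_eigenvectorBasis]
    rfl
  refine le_antisymm (T.opNorm_le_bound hMpos.le fun x => ?_) ?_
  · have hx : ∑ i, b.repr x i • b i = x := b.sum_repr x
    have hTx : T x = ∑ i, (μ i * b.repr x i) • b i := by
      conv_lhs => rw [← hx]
      rw [map_sum]
      exact Finset.sum_congr rfl fun i _ => by
        rw [_root_.map_smul, hTb, smul_smul, mul_comm]
    have hn1 : ‖T x‖ ^ 2 = ∑ i, (μ i * b.repr x i) * (μ i * b.repr x i) := by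
      rw [← real_inner_self_eq_norm_sq, hTx]
      simpa using b.orthonormal.inner_sum (fun i => μ i * b.repr x i)
        (fun i => μ i * b.repr x i) Finset.univ
    have hn2 : ‖x‖ ^ 2 = ∑ i, b.repr x i * b.repr x i := by
      rw [← real_inner_self_eq_norm_sq]
      conv_lhs => rw [← hx]
      simpa using b.orthonormal.inner_sum (fun i => b.repr x i)
        (fun i => b.repr x i) Finset.univ
    have hsq : ‖T x‖ ^ 2 ≤ (M * ‖x‖) ^ 2 := by
      rw [hn1, mul_pow, hn2, Finset.mul_sum]
      refine Finset.sum_le_sum fun i _ => ?_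
      have h := mul_le_mul_of_nonneg_right
        (mul_le_mul (hle i) (hle i) (hμpos i).le hMpos.le)
        (mul_self_nonneg (b.repr x i))
      calc μ i * b.repr x i * (μ i * b.repr x i)
          = μ i * μ i * (b.repr x i * b.repr x i) := by ring
        _ ≤ M * M * (b.repr x i * b.repr x i) := h
        _ = M ^ 2 * (b.repr x i * b.repr x i) := by ring
    exact (pow_le_pow_iff_left₀ (norm_nonneg _)
      (mul_nonneg hMpos.le (norm_nonneg _)) two_ne_zero).mp hsq
  · have hb1 : ‖b i1‖ = 1 := b.orthonormal.1 i1
    have h2 : M = ‖T (b i1)‖ := by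
      rw [hTb i1, norm_smul, hb1, mul_one, Real.norm_eq_abs, abs_of_pos (hμpos i1), hi1]
    calc M = ‖T (b i1)‖ := h2
      _ ≤ ‖T‖ * ‖b i1‖ := T.le_opNorm _
      _ = ‖T‖ := by rw [hb1, mul_one]

lemma iInf_inv_eig {p : ℕ} [Nonempty (Fin p)] (Ω : Matrix (Fin p) (Fin p) ℝ)
    (hΩ : Ω.PosDef) (hinv : (Ω⁻¹).IsHermitian) :
    (⨅ i, hinv.eigenvalues i) = (⨆ i, hΩ.1.eigenvalues i)⁻¹ := by
  set μ : Fin p → ℝ := hΩ.1.eigenvalues with hμdef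
  set ν : Fin p → ℝ := hinv.eigenvalues with hνdef
  have hμpos : ∀ i, 0 < μ i := fun i => hΩ.eigenvalues_pos i
  have hνpos : ∀ i, 0 < ν i := fun i => hΩ.inv.eigenvalues_pos i
  obtain ⟨u, hu⟩ := hΩ.isUnit
  have hiff : ∀ r : ℝ, r ≠ 0 → (r ∈ spectrum ℝ Ω ↔ r⁻¹ ∈ spectrum ℝ (Ω⁻¹)) := by
    intro r hr
    have h := spectrum.inv_mem_iff (R := ℝ) (r := Units.mk0 r hr) (a := u)
    rw [Matrix.coe_units_inv, hu] at h
    simpa using h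
  have hspecΩ : spectrum ℝ Ω = Set.range μ := hΩ.1.spectrum_real_eq_range_eigenvalues
  have hspecB : spectrum ℝ (Ω⁻¹) = Set.range ν := hinv.spectrum_real_eq_range_eigenvalues
  obtain ⟨i0, hi0⟩ := exists_eq_ciInf_of_finite (f := ν)
  obtain ⟨i1, hi1⟩ := exists_eq_ciSup_of_finite (f := μ)
  have hMpos : 0 < ⨆ i, μ i := hi1 ▸ hμpos i1
  refine le_antisymm ?_ ?_
  · -- ⨅ ν ≤ (⨆ μ)⁻¹ : since (⨆ μ)⁻¹ ∈ range ν
    have h1 : (μ i1)⁻¹ ∈ spectrum ℝ (Ω⁻¹) :=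
      (hiff (μ i1) (hμpos i1).ne').mp (hspecΩ ▸ Set.mem_range_self i1)
    rw [hspecB] at h1
    obtain ⟨k, hk⟩ := h1
    rw [← hi1, ← hk]
    exact ciInf_le (Finite.bddBelow_range ν) k
  · -- (⨆ μ)⁻¹ ≤ ⨅ ν : since (⨅ ν)⁻¹ ∈ range μ hence ≤ ⨆ μ
    have h1 : ((ν i0)⁻¹)⁻¹ ∈ spectrum ℝ (Ω⁻¹) := by
      rw [inv_inv]
      exact hspecB ▸ Set.mem_range_self i0
    have h2 : (ν i0)⁻¹ ∈ spectrum ℝ Ω :=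
      (hiff ((ν i0)⁻¹) (inv_ne_zero (hνpos i0).ne')).mpr h1
    rw [hspecΩ] at h2
    obtain ⟨k, hk⟩ := h2
    have h3 : (ν i0)⁻¹ ≤ ⨆ i, μ i := hk ▸ le_ciSup (Finite.bddAbove_range μ) k
    rw [← hi0]
    exact (inv_le_comm₀ hMpos (hνpos i0)).mpr h3

/-- Let `Ω` be symmetric positive definite and `V` a nonempty set of index
pairs `(i,j)` with `i ≤ j` (each unordered pair appearing at most once).  Then the matrix
`H_Ω` with entries `tr(Ω⁻¹E_(i,j)Ω⁻¹E_(l,m))` for `(i,j),(l,m) ∈ V` is symmetric positive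
definite and its smallest eigenvalue is at least `(eig₁(Ω⁻¹))² = 1/‖Ω‖₍₂,₂₎² > 0`. -/
theorem stmt7 (p : ℕ) (Ω : Matrix (Fin p) (Fin p) ℝ) (hΩ : Ω.PosDef)
    (V : Finset (Fin p × Fin p)) (hVne : V.Nonempty) (hV : ∀ ij ∈ V, ij.1 ≤ ij.2) :
    (hessMat Ω V).PosDef ∧
    (∀ (hinv : (Ω⁻¹).IsHermitian) (hH : (hessMat Ω V).IsHermitian)
        (a : {ij // ij ∈ V}),
      (⨅ i, hinv.eigenvalues i) ^ 2 ≤ hH.eigenvalues a) ∧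
    (∀ (hinv : (Ω⁻¹).IsHermitian),
      (⨅ i, hinv.eigenvalues i) ^ 2 = 1 / opNorm Ω ^ 2) ∧
    0 < 1 / opNorm Ω ^ 2 := by
  have hne : Nonempty (Fin p) := ⟨hVne.choose.1⟩
  have hinv0 : (Ω⁻¹).IsHermitian := hΩ.inv.1
  have hlam_pos : ∀ (hinv : (Ω⁻¹).IsHermitian), 0 < ⨅ i, hinv.eigenvalues i := by
    intro hinv
    obtain ⟨i0, hi0⟩ := exists_eq_ciInf_of_finite (f := hinv.eigenvalues)
    exact hi0 ▸ hΩ.inv.eigenvalues_pos i0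
  have hBt : (Ω⁻¹)ᵀ = Ω⁻¹ := by
    rw [← Matrix.conjTranspose_eq_transpose_of_trivial]; exact hinv0
  have part3 : ∀ (hinv : (Ω⁻¹).IsHermitian),
      (⨅ i, hinv.eigenvalues i) ^ 2 = 1 / opNorm Ω ^ 2 := by
    intro hinv
    rw [iInf_inv_eig Ω hΩ hinv, show opNorm Ω = ⨆ i, hΩ.1.eigenvalues i from
      opNorm_eq_iSup Ω hΩ, inv_pow, one_div]
  refine ⟨⟨?_, ?_⟩, ?_, part3, ?_⟩
  · -- Hermitian
    show (hessMat Ω V)ᴴ = hessMat Ω V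
    ext a b
    rw [Matrix.conjTranspose_apply, star_trivial]
    show (Ω⁻¹ * Estd b.1.1 b.1.2 * Ω⁻¹ * Estd a.1.1 a.1.2).trace
      = (Ω⁻¹ * Estd a.1.1 a.1.2 * Ω⁻¹ * Estd b.1.1 b.1.2).trace
    conv_lhs => rw [← Matrix.trace_transpose]
    rw [show ((Ω⁻¹ * Estd b.1.1 b.1.2 * Ω⁻¹ * Estd a.1.1 a.1.2)ᵀ)
        = Estd a.1.1 a.1.2 * Ω⁻¹ * Estd b.1.1 b.1.2 * Ω⁻¹ from by
      simp [Matrix.transpose_mul, Estd_trans, hBt, Matrix.mul_assoc]]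
    rw [Matrix.trace_mul_comm]
    simp [Matrix.mul_assoc]
  · -- positive definiteness
    suffices H : ∀ x : {ij // ij ∈ V} → ℝ, x ≠ 0 → 0 < star x ⬝ᵥ (hessMat Ω V *ᵥ x) by
      intro x hx
      have h0 : (⇑x : {ij // ij ∈ V} → ℝ) ≠ 0 := fun h => hx (Finsupp.coe_eq_zero.mp h)
      simpa [dotProduct, mulVec, Finsupp.sum_fintype, Finset.mul_sum, mul_assoc] using H _ h0
    intro x hx
    have hstarx : star x = x := funext fun a => star_trivial _
    rw [hstarx]
    obtain ⟨a0, ha0⟩ := Function.ne_iff.mp hx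
    have hsum : 0 < ∑ a : {ij // ij ∈ V}, x a ^ 2 :=
      Finset.sum_pos' (fun a _ => sq_nonneg _)
        ⟨a0, Finset.mem_univ _, pow_pos (abs_pos.mpr ha0) 2 |>.trans_le (by rw [sq_abs])⟩
    calc (0:ℝ) < (⨅ i, hinv0.eigenvalues i) ^ 2 * ∑ a, x a ^ 2 :=
          mul_pos (pow_pos (hlam_pos hinv0) 2) hsum
      _ ≤ x ⬝ᵥ (hessMat Ω V *ᵥ x) := quad_key Ω hΩ V hV hinv0 x
  · -- eigenvalue bound
    intro hinv hH a
    set w : {ij // ij ∈ V} → ℝ := ⇑(hH.eigenvectorBasis a) with hwdef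
    have hmv : hessMat Ω V *ᵥ w = hH.eigenvalues a • w := hH.mulVec_eigenvectorBasis a
    have hnorm : ‖hH.eigenvectorBasis a‖ = 1 := hH.eigenvectorBasis.orthonormal.1 a
    have hw1 : ∑ i, w i * w i = 1 := by
      have h := real_inner_self_eq_norm_sq (hH.eigenvectorBasis a)
      rw [hnorm, one_pow] at h
      rw [← h, PiLp.inner_apply]
      simp only [RCLike.inner_apply, starRingEnd_apply, star_trivial]
      rfl
    have hq := quad_key Ω hΩ V hV hinv w
    rw [hmv] at hq
    have hdp : w ⬝ᵥ (hH.eigenvalues a • w) = hH.eigenvalues a := by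
      rw [dotProduct_smul, smul_eq_mul,
        show w ⬝ᵥ w = ∑ i, w i * w i from rfl, hw1, mul_one]
    have hsumsq : ∑ i, w i ^ 2 = 1 := by simpa [sq] using hw1
    calc (⨅ i, hinv.eigenvalues i) ^ 2
        = (⨅ i, hinv.eigenvalues i) ^ 2 * ∑ i, w i ^ 2 := by rw [hsumsq, mul_one]
      _ ≤ w ⬝ᵥ (hH.eigenvalues a • w) := hq
      _ = hH.eigenvalues a := hdp
  · -- positivity of 1 / opNorm ^ 2
    rw [← part3 hinv0]
    exact pow_pos (hlam_pos hinv0) 2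

end
end
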